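/- Let D be a commutative K-algebra, n ≥ 1, and let C = x + C_{-1}x^{-1} + C_{-2}x^{-2} + ⋯ ∈ D((x^{-1})). For every j ≥ 0, the coefficient (C^n)_{-m-j} equals n·C_{-m-n-j+1} plus a polynomial expression (with integer coefficients) in C_{-1}, …, C_{-m-n-j+2} only. Consequently, given arbitrary C_{-1}, …, C_{-m-n+2} ∈ D satisfying (C^n)_{-k} = 0 for k = 1, …, m−1, there exist unique C_{-m-n+1}, C_{-m-n}, … ∈ D such that (C^n)_{-k} = 0 for all k ≥ 1 with k ≤ m−1+j for every j (i.e., C^n has no negative-degree terms up to any prescribed order). -/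

import Mathlib

open Polynomial HahnSeries Finset

noncomputable section

namespace St12

variable {D : Type*} [CommRing D]

lemma coeff_mul_lb {A B : LaurentSeries D} {a b : ℤ}
    (hA : ∀ i < a, A.coeff i = 0) (hB : ∀ i < b, B.coeff i = 0) :
    (∀ i < a + b, (A * B).coeff i = 0) ∧ (A * B).coeff (a + b) = A.coeff a * B.coeff b := by
  constructor
  · intro i hi
    rw [HahnSeries.coeff_mul]
    refine Finset.sum_eq_zero fun ij hij => ?_
    rw [Finset.mem_addAntidiagonal] at hij
    rcases lt_or_ge ij.1 a with h | h
    · rw [hA _ h, zero_mul]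
    · have : ij.2 < b := by omega
      rw [hB _ this, mul_zero]
  · rw [HahnSeries.coeff_mul]
    refine Finset.sum_eq_single (a, b) (fun ij hij hne => ?_) (fun h => ?_)
    · rw [Finset.mem_addAntidiagonal] at hij
      rcases lt_trichotomy ij.1 a with h | h | h
      · rw [hA _ h, zero_mul]
      · exact absurd (Prod.ext h (by omega)) hne
      · have : ij.2 < b := by omega
        rw [hB _ this, mul_zero]
    · rw [Finset.mem_addAntidiagonal, not_and_or, not_and_or] at h
      rcases h with h | h | h
      · simp only [HahnSeries.mem_support, not_not] at h
        rw [h, zero_mul]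
      · simp only [HahnSeries.mem_support, not_not] at h
        rw [h, mul_zero]
      · omega

lemma coeff_pow_lb {A : LaurentSeries D} {a : ℤ}
    (hA : ∀ i < a, A.coeff i = 0) (k : ℕ) :
    (∀ i < (k : ℤ) * a, (A ^ k).coeff i = 0) ∧ (A ^ k).coeff ((k : ℤ) * a) = (A.coeff a) ^ k := by
  induction k with
  | zero =>
    simp only [pow_zero, Nat.cast_zero, zero_mul]
    constructor
    · intro i hi
      rw [HahnSeries.coeff_one, if_neg (by omega)]
    · rw [HahnSeries.coeff_one, if_pos rfl]
  | succ k ih =>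
    have h := coeff_mul_lb ih.1 hA
    have harith : (k : ℤ) * a + a = ((k : ℕ) + 1 : ℤ) * a := by ring
    constructor
    · intro i hi
      rw [pow_succ]
      exact h.1 i (by push_cast at hi ⊢; omega)
    · rw [pow_succ]
      push_cast
      rw [← harith, h.2, ih.2, pow_succ]


lemma coeff_mul_natCast {A : LaurentSeries D} {N : ℕ} {i : ℤ} :
    (A * (N : LaurentSeries D)).coeff i = N • A.coeff i := by
  rw [show A * (N : LaurentSeries D) = N • A by rw [nsmul_eq_mul, mul_comm]]
  rw [HahnSeries.coeff_nsmul]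
  rfl

lemma key (n : ℕ) (hn : 1 ≤ n) (r : ℤ) (hr : 1 ≤ r)
    {C C' : LaurentSeries D}
    (hC : ∀ i < (-1 : ℤ), C.coeff i = 0) (hC' : ∀ i < (-1 : ℤ), C'.coeff i = 0)
    (h1 : C.coeff (-1) = 1) (h1' : C'.coeff (-1) = 1)
    (hag : ∀ i : ℤ, i ≤ r + n - 2 → C.coeff i = C'.coeff i) :
    (C ^ n).coeff r =
      (C' ^ n).coeff r + n • (C.coeff (r + n - 1) - C'.coeff (r + n - 1)) := by
  obtain ⟨p, rfl⟩ : ∃ p, n = p + 1 := ⟨n - 1, by omega⟩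
  set E : LaurentSeries D := C - C' with hE
  have hElb : ∀ i < r + ((p : ℤ) + 1) - 1, E.coeff i = 0 := by
    intro i hi
    rw [hE, HahnSeries.coeff_sub]
    rcases lt_or_ge i (-1) with h | h
    · rw [hC _ h, hC' _ h, sub_self]
    · rw [hag i (by push_cast; omega), sub_self]
  have hEtop : E.coeff (r + ((p : ℤ) + 1) - 1) =
      C.coeff (r + ((p : ℤ) + 1) - 1) - C'.coeff (r + ((p : ℤ) + 1) - 1) := by
    rw [hE, HahnSeries.coeff_sub]
  have hCsum : C = C' + E := by rw [hE]; ring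
  rw [hCsum, add_pow]
  have hsum := map_sum (HahnSeries.coeff.addMonoidHom (R := D) (Γ := ℤ) r)
    (fun k => C' ^ k * E ^ (p + 1 - k) * ((p+1).choose k : LaurentSeries D))
    (Finset.range (p + 1 + 1))
  simp only [HahnSeries.coeff.addMonoidHom_apply] at hsum
  rw [hsum]
  rw [Finset.sum_range_succ, Finset.sum_range_succ]
  have hzero : ∀ k ∈ Finset.range p,
      (C' ^ k * E ^ (p + 1 - k) * ((p+1).choose k : LaurentSeries D)).coeff r = 0 := by
    intro k hk
    rw [Finset.mem_range] at hk
    rw [coeff_mul_natCast]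
    have hCk := coeff_pow_lb hC' k
    have hEk := coeff_pow_lb hElb (p + 1 - k)
    have hmul := (coeff_mul_lb hCk.1 hEk.1).1
    have hklt : (k : ℤ) < p := by exact_mod_cast hk
    have hcast : ((p + 1 - k : ℕ) : ℤ) = (p : ℤ) + 1 - k := by omega
    have hr2 : r < (k : ℤ) * (-1) + ((p + 1 - k : ℕ) : ℤ) * (r + ((p : ℤ) + 1) - 1) := by
      rw [hcast]
      have hk0 : (0 : ℤ) ≤ k := Int.natCast_nonneg k
      nlinarith
    rw [hmul r hr2, smul_zero]
  rw [Finset.sum_eq_zero hzero, zero_add]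
  rw [coeff_mul_natCast, coeff_mul_natCast]
  have hCp := coeff_pow_lb hC' p
  have hEk1 := coeff_pow_lb hElb 1
  have e1 : p + 1 - p = 1 := by omega
  rw [e1]
  have hmul := (coeff_mul_lb hCp.1 hEk1.1).2
  have harg : (p : ℤ) * (-1) + (1 : ℤ) * (r + ((p : ℤ) + 1) - 1) = r := by push_cast; ring
  rw [show ((1 : ℕ) : ℤ) = (1 : ℤ) by norm_num] at hmul
  rw [harg] at hmul
  rw [hmul, hCp.2, h1', one_pow, one_mul]
  rw [Nat.choose_self, Nat.choose_succ_self_right, Nat.sub_self, pow_zero, mul_one,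
    one_smul, pow_one, one_mul, hEtop]
  have hcast2 : r + ((p : ℤ) + 1) - 1 = r + ((p + 1 : ℕ) : ℤ) - 1 := by push_cast; ring
  rw [hcast2, HahnSeries.coeff_add]
  have hE2 : E.coeff (r + ((p + 1 : ℕ) : ℤ) - 1) =
      C.coeff (r + ((p + 1 : ℕ) : ℤ) - 1) - C'.coeff (r + ((p + 1 : ℕ) : ℤ) - 1) := by
    rw [hE, HahnSeries.coeff_sub]
  rw [hE2]
  ring_nf

lemma key_eq (n : ℕ) (hn : 1 ≤ n) (r : ℤ) (hr : 1 ≤ r)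
    {C C' : LaurentSeries D}
    (hC : ∀ i < (-1 : ℤ), C.coeff i = 0) (hC' : ∀ i < (-1 : ℤ), C'.coeff i = 0)
    (h1 : C.coeff (-1) = 1) (h1' : C'.coeff (-1) = 1)
    (hag : ∀ i : ℤ, i ≤ r + n - 1 → C.coeff i = C'.coeff i) :
    (C ^ n).coeff r = (C' ^ n).coeff r := by
  rw [key n hn r hr hC hC' h1 h1' (fun i hi => hag i (by omega)),
    hag (r + n - 1) le_rfl, sub_self, smul_zero, add_zero]

/-- truncated series -/
def trunc (d : ℕ → D) (N : ℕ) : LaurentSeries D :=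
  HahnSeries.single (-1 : ℤ) (1 : D) + ∑ i ∈ Finset.Icc 1 N, HahnSeries.single (i : ℤ) (d i)

lemma trunc_coeff (d : ℕ → D) (N : ℕ) (t : ℤ) :
    (trunc d N).coeff t = if t = -1 then 1 else
      if 1 ≤ t ∧ t ≤ N then d t.toNat else 0 := by
  rw [trunc, HahnSeries.coeff_add]
  have hsum := map_sum (HahnSeries.coeff.addMonoidHom (R := D) (Γ := ℤ) t)
    (fun i : ℕ => HahnSeries.single ((i : ℕ) : ℤ) (d i)) (Finset.Icc 1 N)
  simp only [HahnSeries.coeff.addMonoidHom_apply] at hsum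
  rw [hsum]
  by_cases h1 : t = -1
  · rw [if_pos h1]
    rw [h1, HahnSeries.coeff_single_same]
    rw [Finset.sum_eq_zero, add_zero]
    intro i hi
    rw [Finset.mem_Icc] at hi
    exact HahnSeries.coeff_single_of_ne (by omega)
  · rw [if_neg h1, HahnSeries.coeff_single_of_ne (by omega), zero_add]
    by_cases h2 : 1 ≤ t ∧ t ≤ N
    · rw [if_pos h2]
      rw [Finset.sum_eq_single t.toNat]
      · have ht : ((t.toNat : ℤ)) = t := by omega
        rw [HahnSeries.coeff_single, if_pos ht.symm]
      · intro i hi hne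
        rw [Finset.mem_Icc] at hi
        exact HahnSeries.coeff_single_of_ne (by omega)
      · intro h
        rw [Finset.mem_Icc] at h
        omega
    · rw [if_neg h2]
      refine Finset.sum_eq_zero fun i hi => ?_
      rw [Finset.mem_Icc] at hi
      exact HahnSeries.coeff_single_of_ne (by omega)

lemma coeff_mul_mem {S : Subalgebra ℤ D} {A B : LaurentSeries D}
    (hA : ∀ i, A.coeff i ∈ S) (hB : ∀ i, B.coeff i ∈ S) :
    ∀ i, (A * B).coeff i ∈ S := by
  intro i
  rw [HahnSeries.coeff_mul]
  exact Subalgebra.sum_mem S fun ij _ => mul_mem (hA _) (hB _)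

lemma coeff_pow_mem {S : Subalgebra ℤ D} {A : LaurentSeries D}
    (hA : ∀ i, A.coeff i ∈ S) (k : ℕ) :
    ∀ i, (A ^ k).coeff i ∈ S := by
  induction k with
  | zero =>
    intro i
    rw [pow_zero, HahnSeries.coeff_one]
    split
    · exact one_mem S
    · exact zero_mem S
  | succ k ih =>
    rw [pow_succ]
    exact coeff_mul_mem ih hA

lemma part1 (n m j : ℕ) (hn : 1 ≤ n) (hm : 1 ≤ m) (C : LaurentSeries D)
    (h1 : C.coeff (-1) = 1) (h0 : C.coeff 0 = 0)
    (hlb : ∀ i : ℤ, i < -1 → C.coeff i = 0) :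
    ∃ H : MvPolynomial (Fin (m + n + j - 2)) ℤ,
      (C ^ n).coeff ((m : ℤ) + j) =
        n • C.coeff ((m : ℤ) + n + j - 1) +
          MvPolynomial.aeval (fun i : Fin (m + n + j - 2) => C.coeff ((i : ℤ) + 1)) H := by
  set N : ℕ := m + n + j - 2 with hN
  set r : ℤ := (m : ℤ) + j with hr
  have hNr : (N : ℤ) = r + n - 2 := by rw [hN, hr]; omega
  set T : LaurentSeries D := trunc (fun i : ℕ => C.coeff (i : ℤ)) N with hT
  have hTc : ∀ t, T.coeff t = if t = -1 then 1 else
      if 1 ≤ t ∧ t ≤ N then C.coeff ((t.toNat : ℕ) : ℤ) else 0 := fun t => trunc_coeff _ _ _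
  have hT1 : T.coeff (-1) = 1 := by rw [hTc]; simp
  have hTlb : ∀ i : ℤ, i < -1 → T.coeff i = 0 := by
    intro i hi
    rw [hTc, if_neg (by omega), if_neg (by omega)]
  have hag : ∀ i : ℤ, i ≤ r + n - 2 → C.coeff i = T.coeff i := by
    intro i hi
    rw [hTc]
    rcases lt_trichotomy i (-1) with h | h | h
    · rw [hlb i h, if_neg (by omega), if_neg (by omega)]
    · rw [if_pos h, h, h1]
    · rcases eq_or_lt_of_le (by omega : (0:ℤ) ≤ i) with h' | h'
      · rw [if_neg (by omega), if_neg (by omega), ← h', h0]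
      · rw [if_neg (by omega), if_pos (by omega), (by omega : ((i.toNat : ℕ) : ℤ) = i)]
  have hkey := key n hn r (by rw [hr]; omega) hlb hTlb h1 hT1 hag
  have hTtop : T.coeff (r + n - 1) = 0 := by
    rw [hTc, if_neg (by omega), if_neg (by omega)]
  rw [hTtop, sub_zero] at hkey
  set v : Fin N → D := fun i : Fin N => C.coeff ((i : ℤ) + 1) with hv
  have hmemT : ∀ t, T.coeff t ∈ Algebra.adjoin ℤ (Set.range v) := by
    intro t
    rw [hTc]
    split
    · exact one_mem _
    · split
      · rename_i h2
        have hlt : t.toNat - 1 < N := by omega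
        have : C.coeff ((t.toNat : ℕ) : ℤ) = v ⟨t.toNat - 1, hlt⟩ := by
          rw [hv]
          congr 1
          simp only [Fin.val_mk]
          omega
        rw [this]
        exact Algebra.subset_adjoin (Set.mem_range_self _)
      · exact zero_mem _
  have hmem : (T ^ n).coeff r ∈ Algebra.adjoin ℤ (Set.range v) := coeff_pow_mem hmemT n r
  rw [Algebra.adjoin_range_eq_range_aeval] at hmem
  obtain ⟨H, hH⟩ := hmem
  refine ⟨H, ?_⟩
  have hidx : (m : ℤ) + n + j - 1 = r + n - 1 := by rw [hr]; ring
  rw [hidx, hkey, ← hH]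
  rw [add_comm]
  rfl


/-- the full series with coefficients `d` on positive indices -/
def fullSeries (d : ℕ → D) : LaurentSeries D :=
  ⟨fun t => if t = -1 then 1 else if 1 ≤ t then d t.toNat else 0, by
    have hbdd : BddBelow (Function.support fun t : ℤ =>
        if t = -1 then (1 : D) else if 1 ≤ t then d t.toNat else 0) := by
      refine ⟨-1, fun t ht => ?_⟩
      by_contra hc
      push_neg at hc
      apply ht
      simp only [if_neg (show ¬ t = -1 by omega), if_neg (show ¬ (1:ℤ) ≤ t by omega)]
    exact Set.IsWF.isPWO (BddBelow.wellFoundedOn_lt hbdd)⟩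

lemma fullSeries_coeff (d : ℕ → D) (t : ℤ) :
    (fullSeries d).coeff t = if t = -1 then 1 else if 1 ≤ t then d t.toNat else 0 := rfl

lemma trunc_congr {d d' : ℕ → D} {N : ℕ} (h : ∀ i, 1 ≤ i → i ≤ N → d i = d' i) :
    trunc d N = trunc d' N := by
  unfold trunc
  congr 1
  refine Finset.sum_congr rfl fun i hi => ?_
  rw [Finset.mem_Icc] at hi
  rw [h i hi.1 hi.2]

lemma trunc_coeff_neg1 (d : ℕ → D) (N : ℕ) : (trunc d N).coeff (-1) = 1 := by
  rw [trunc_coeff]; simp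

lemma trunc_lb (d : ℕ → D) (N : ℕ) : ∀ i : ℤ, i < -1 → (trunc d N).coeff i = 0 := by
  intro i hi
  rw [trunc_coeff, if_neg (by omega), if_neg (by omega)]

lemma full_lb (d : ℕ → D) : ∀ i : ℤ, i < -1 → (fullSeries d).coeff i = 0 := by
  intro i hi
  rw [fullSeries_coeff, if_neg (by omega), if_neg (by omega)]

lemma full_trunc_agree (d : ℕ → D) (M : ℕ) :
    ∀ t : ℤ, t ≤ M → (fullSeries d).coeff t = (trunc d M).coeff t := by
  intro t ht
  rw [fullSeries_coeff, trunc_coeff]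
  by_cases h1 : t = -1
  · rw [if_pos h1, if_pos h1]
  · rw [if_neg h1, if_neg h1]
    by_cases h2 : 1 ≤ t
    · rw [if_pos h2, if_pos ⟨h2, ht⟩]
    · rw [if_neg h2, if_neg (by omega)]

-- helper coeff lemmas
lemma full_coeff_neg1 (d : ℕ → D) : (fullSeries d).coeff (-1) = 1 := by
  rw [fullSeries_coeff]; simp

lemma full_coeff_zero (d : ℕ → D) : (fullSeries d).coeff 0 = 0 := by
  rw [fullSeries_coeff]; norm_num

lemma full_coeff_nat (d : ℕ → D) {k : ℕ} (hk : 1 ≤ k) :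
    (fullSeries d).coeff (k : ℤ) = d k := by
  rw [fullSeries_coeff, if_neg (by omega), if_pos (by omega), Int.toNat_natCast]


section Rec

variable (K : Type*) [Field K] [CharZero K]
variable (D : Type*) [CommRing D] [Algebra K D]

lemma nsmul_inv_mul {n : ℕ} (hn : 1 ≤ n) (x : D) :
    n • (-(algebraMap K D (n : K)⁻¹) * x) = -x := by
  rw [nsmul_eq_mul, ← map_natCast (algebraMap K D) n, neg_mul, mul_neg, ← mul_assoc,
    ← map_mul, mul_inv_cancel₀ (Nat.cast_ne_zero.mpr (by omega) : (n : K) ≠ 0),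
    map_one, one_mul]

include K in
lemma nsmul_cancel {n : ℕ} (hn : 1 ≤ n) {x y : D} (h : n • x = n • y) : x = y := by
  have hnz : (n : K) ≠ 0 := Nat.cast_ne_zero.mpr (by omega)
  have h2 := congrArg (fun z => algebraMap K D (n : K)⁻¹ * z) h
  simpa only [nsmul_eq_mul, ← map_natCast (algebraMap K D) n, ← mul_assoc, ← map_mul,
    inv_mul_cancel₀ hnz, map_one, one_mul] using h2

variable (n m : ℕ) (c : ℕ → D)

/-- the recursion step value -/
def val (f : ℕ → D) (k : ℕ) : D :=
  if k = 0 then 0 else if k ≤ m + n - 2 then c k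
  else -(algebraMap K D (n : K)⁻¹) * ((trunc f (k - 1)) ^ n).coeff ((k : ℤ) - n + 1)

/-- approximations to the coefficient sequence -/
def seqAux : ℕ → ℕ → D
  | 0 => fun _ => 0
  | k + 1 => fun j => if j = k then val K D n m c (seqAux k) k else seqAux k j

/-- the coefficient sequence -/
def seq (k : ℕ) : D := seqAux K D n m c (k + 1) k

lemma seqAux_agree : ∀ k j : ℕ, j < k → seqAux K D n m c k j = seq K D n m c j := by
  intro k
  induction k with
  | zero => intro j hj; omega
  | succ k ih =>
    intro j hj
    rcases eq_or_lt_of_le (Nat.lt_succ_iff.mp hj) with h | h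
    · subst h; rfl
    · show (if j = k then val K D n m c (seqAux K D n m c k) k else seqAux K D n m c k j) = _
      rw [if_neg (by omega), ih j h]

lemma seq_def (k : ℕ) : seq K D n m c k = val K D n m c (seqAux K D n m c k) k := by
  show (if k = k then _ else _) = _
  rw [if_pos rfl]

lemma seq_eq_c {k : ℕ} (h1 : 1 ≤ k) (h2 : k ≤ m + n - 2) : seq K D n m c k = c k := by
  rw [seq_def, val, if_neg (by omega), if_pos h2]

lemma seq_rec {k : ℕ} (h1 : m + n - 1 ≤ k) (hn : 1 ≤ n) (hm : 1 ≤ m) :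
    seq K D n m c k =
      -(algebraMap K D (n : K)⁻¹) *
        ((trunc (seq K D n m c) (k - 1)) ^ n).coeff ((k : ℤ) - n + 1) := by
  rw [seq_def, val, if_neg (by omega), if_neg (by omega)]
  have heq : trunc (seqAux K D n m c k) (k - 1) = trunc (seq K D n m c) (k - 1) :=
    trunc_congr fun i hi1 hi2 => seqAux_agree K D n m c k i (by omega)
  rw [heq]

end Rec

section Main

variable (K : Type*) [Field K] [CharZero K]
variable (D : Type*) [CommRing D] [Algebra K D]
variable (n m : ℕ) (c : ℕ → D)

lemma full_pow_zero (hn : 1 ≤ n) (hm : 1 ≤ m)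
    (hc : ∀ k : ℕ, 1 ≤ k → k ≤ m - 1 →
      ((trunc c (m + n - 2)) ^ n).coeff (k : ℤ) = 0) :
    ∀ r : ℤ, 1 ≤ r → ((fullSeries (seq K D n m c)) ^ n).coeff r = 0 := by
  intro r hr
  set d : ℕ → D := seq K D n m c with hd
  set F : LaurentSeries D := fullSeries d with hF
  have hF1 : F.coeff (-1) = 1 := full_coeff_neg1 d
  have hFlb := full_lb d
  rcases lt_or_ge r (m : ℤ) with hrm | hrm
  · -- small case : 1 ≤ r ≤ m - 1
    set M : ℕ := m + n - 2 with hM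
    have hMc : ((M : ℕ) : ℤ) = (m : ℤ) + n - 2 := by omega
    have hag : ∀ i : ℤ, i ≤ r + n - 1 → F.coeff i = (trunc d M).coeff i := by
      intro i hi
      exact full_trunc_agree d M i (by omega)
    have hkey := key_eq n hn r hr hFlb (trunc_lb d M) hF1 (trunc_coeff_neg1 d M) hag
    have htc : trunc d M = trunc c M :=
      trunc_congr fun i hi1 hi2 => seq_eq_c K D n m c hi1 hi2
    rw [hkey, htc]
    have := hc r.toNat (by omega) (by omega)
    rwa [show ((r.toNat : ℕ) : ℤ) = r by omega] at this
  · -- recursion case : r ≥ m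
    set k : ℕ := (r + n - 1).toNat with hkdef
    have hk : ((k : ℕ) : ℤ) = r + n - 1 := by omega
    have hk1 : m + n - 1 ≤ k := by omega
    have hkm1 : ((k - 1 : ℕ) : ℤ) = r + n - 2 := by omega
    have hag : ∀ i : ℤ, i ≤ r + n - 2 → F.coeff i = (trunc d (k - 1)).coeff i := by
      intro i hi
      exact full_trunc_agree d (k - 1) i (by omega)
    have hkey := key n hn r hr hFlb (trunc_lb d (k - 1)) hF1 (trunc_coeff_neg1 d (k - 1)) hag
    have hFtop : F.coeff (r + n - 1) = d k := by
      rw [← hk, hF]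
      exact full_coeff_nat d (by omega)
    have hTtop : (trunc d (k - 1)).coeff (r + n - 1) = 0 := by
      rw [trunc_coeff, if_neg (by omega), if_neg (by omega)]
    have hrec := seq_rec K D n m c hk1 hn hm
    have hidx : ((k : ℕ) : ℤ) - n + 1 = r := by omega
    rw [hidx] at hrec
    rw [hkey, hFtop, hTtop, sub_zero, hd, hrec, nsmul_inv_mul K D hn, add_neg_cancel]

lemma part2_unique (hn : 1 ≤ n) (hm : 1 ≤ m)
    (C' : LaurentSeries D) (h1 : C'.coeff (-1) = 1)
    (hlb : ∀ i : ℤ, i < -1 → C'.coeff i = 0) (h0 : C'.coeff 0 = 0)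
    (hvals : ∀ k : ℕ, 1 ≤ k → k ≤ m + n - 2 → C'.coeff (k : ℤ) = c k)
    (hzero : ∀ k : ℤ, 1 ≤ k → (C' ^ n).coeff k = 0) :
    C' = fullSeries (seq K D n m c) := by
  set d : ℕ → D := seq K D n m c with hd
  have main : ∀ k : ℕ, 1 ≤ k → C'.coeff (k : ℤ) = d k := by
    intro k
    induction k using Nat.strong_induction_on with
    | _ k ih =>
      intro hk1
      by_cases hsmall : k ≤ m + n - 2
      · rw [hvals k hk1 hsmall, hd, seq_eq_c K D n m c hk1 hsmall]
      · have hbig : m + n - 1 ≤ k := by omega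
        set r : ℤ := (k : ℤ) - n + 1 with hrdef
        have hr1 : 1 ≤ r := by omega
        have hkm1 : ((k - 1 : ℕ) : ℤ) = r + n - 2 := by omega
        have hag : ∀ i : ℤ, i ≤ r + n - 2 → C'.coeff i = (trunc d (k - 1)).coeff i := by
          intro i hi
          rw [trunc_coeff]
          rcases lt_trichotomy i (-1) with h | h | h
          · rw [hlb i h, if_neg (by omega), if_neg (by omega)]
          · rw [if_pos h, h, h1]
          · rcases eq_or_lt_of_le (by omega : (0 : ℤ) ≤ i) with h' | h'
            · rw [if_neg (by omega), if_neg (by omega), ← h', h0]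
            · rw [if_neg (by omega), if_pos (by omega)]
              have hlt : i.toNat < k := by omega
              have h1i : 1 ≤ i.toNat := by omega
              have hihi := ih i.toNat hlt h1i
              rw [show ((i.toNat : ℕ) : ℤ) = i by omega] at hihi
              exact hihi
        have hkey := key n hn r hr1 hlb (trunc_lb d (k - 1)) h1 (trunc_coeff_neg1 d (k - 1)) hag
        have hz := hzero r hr1
        have hTtop : (trunc d (k - 1)).coeff (r + n - 1) = 0 := by
          rw [trunc_coeff, if_neg (by omega), if_neg (by omega)]
        have hCtop : C'.coeff (r + n - 1) = C'.coeff (k : ℤ) := by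
          congr 1
          omega
        rw [hz] at hkey
        rw [hTtop, sub_zero, hCtop] at hkey
        have hrec := seq_rec K D n m c hbig hn hm
        have hidx : ((k : ℕ) : ℤ) - n + 1 = r := by omega
        rw [hidx] at hrec
        have hsk : n • d k = -(((trunc d (k - 1)) ^ n).coeff r) := by
          rw [hd, hrec]
          exact nsmul_inv_mul K D hn _
        have hck : n • C'.coeff (k : ℤ) = -(((trunc d (k - 1)) ^ n).coeff r) := by
          rw [eq_neg_iff_add_eq_zero, add_comm]
          exact hkey.symm
        exact nsmul_cancel K D hn (by rw [hck, hsk])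
  ext t
  rw [fullSeries_coeff]
  rcases lt_trichotomy t (-1) with h | h | h
  · rw [hlb t h, if_neg (by omega), if_neg (by omega)]
  · rw [if_pos h, h, h1]
  · rcases eq_or_lt_of_le (by omega : (0 : ℤ) ≤ t) with h' | h'
    · rw [if_neg (by omega), if_neg (by omega), ← h', h0]
    · rw [if_neg (by omega), if_pos (by omega)]
      rw [show t = ((t.toNat : ℕ) : ℤ) by omega]
      exact main t.toNat (by omega)

end Main

end St12

/-- Let `D` be a commutative `K`-algebra and
`C = x + C₋₁x⁻¹ + ⋯ ∈ D((x⁻¹))`.  (1) For every `j ≥ 0` the coefficient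
`(C^n)_{-m-j}` equals `n·C_{-m-n-j+1}` plus an integer polynomial expression in
`C₋₁, …, C_{-m-n-j+2}` only.  (2) Given `C₋₁, …, C_{-m-n+2} ∈ D` satisfying
`(C^n)_{-k} = 0` for `k = 1, …, m−1`, there exist unique
`C_{-m-n+1}, C_{-m-n}, … ∈ D` extending them to a series `C` with
`(C^n)_{-k} = 0` for all `k ≥ 1`.  The coefficient of `x^k` of a Hahn series
is its coefficient at index `-k`, so `C_{-k}` is `C.coeff k`. -/
theorem statement12 (K : Type*) [Field K] [CharZero K]
    (D : Type*) [CommRing D] [Algebra K D] (n m : ℕ) (hn : 1 ≤ n) (hm : 1 ≤ m) :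
    (∀ C : LaurentSeries D,
      C.coeff (-1) = 1 → C.coeff 0 = 0 → (∀ i : ℤ, i < -1 → C.coeff i = 0) →
      ∀ j : ℕ, ∃ H : MvPolynomial (Fin (m + n + j - 2)) ℤ,
        (C ^ n).coeff ((m : ℤ) + j) =
          n • C.coeff ((m : ℤ) + n + j - 1) +
            MvPolynomial.aeval (fun i : Fin (m + n + j - 2) => C.coeff ((i : ℤ) + 1)) H)
    ∧
    (∀ c : ℕ → D,
      (∀ k : ℕ, 1 ≤ k → k ≤ m - 1 →
        ((HahnSeries.single (-1 : ℤ) (1 : D) +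
            ∑ i ∈ Finset.Icc 1 (m + n - 2), HahnSeries.single (i : ℤ) (c i)) ^ n).coeff
          (k : ℤ) = 0) →
      ∃! C : LaurentSeries D,
        C.coeff (-1) = 1 ∧ (∀ i : ℤ, i < -1 → C.coeff i = 0) ∧ C.coeff 0 = 0 ∧
        (∀ k : ℕ, 1 ≤ k → k ≤ m + n - 2 → C.coeff (k : ℤ) = c k) ∧
        (∀ k : ℤ, 1 ≤ k → (C ^ n).coeff k = 0)) := by
  constructor
  · intro C h1 h0 hlb j
    exact St12.part1 n m j hn hm C h1 h0 hlb
  · intro c hc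
    have hc' : ∀ k : ℕ, 1 ≤ k → k ≤ m - 1 →
        ((St12.trunc c (m + n - 2)) ^ n).coeff (k : ℤ) = 0 := hc
    refine ⟨St12.fullSeries (St12.seq K D n m c), ⟨?_, ?_, ?_, ?_, ?_⟩, ?_⟩
    · exact St12.full_coeff_neg1 _
    · exact St12.full_lb _
    · exact St12.full_coeff_zero _
    · intro k hk1 hk2
      rw [St12.full_coeff_nat _ hk1]
      exact St12.seq_eq_c K D n m c hk1 hk2
    · exact St12.full_pow_zero K D n m c hn hm hc'
    · rintro C' ⟨a1, a2, a3, a4, a5⟩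
      exact St12.part2_unique K D n m c hn hm C' a1 a2 a3 a4 a5



end
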